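/- arXiv:1608.04260 — 3 statements merged into one kernel-verified Lean document; each statement's English description precedes it below -/
import Mathlib

section
/- Let Π be a nonempty set (of policies) and for each π ∈ Π let a_π, c_π : ℕ → ℝ be bounded sequences (the per-slot expected reward and per-slot expected static-user rate under π). Define J(π) = liminf_{N→∞} (1/N) Σ_{τ=1}^{N} a_π(τ), C(π) = liminf_{N→∞} (1/N) Σ_{τ=1}^{N} c_π(τ), and for ξ ≥ 0 the Lagrangian value L_ξ(π) = liminf_{N→∞} (1/N) Σ_{τ=1}^{N} (a_π(τ) + ξ c_π(τ)). Suppose there exist ξ* ≥ 0 and π* ∈ Π such that (i) L_{ξ*}(π*) ≥ L_{ξ*}(π) for all π ∈ Π (π* is optimal for the unconstrained Lagrangian problem with multiplier ξ*), (ii) the Cesàro averages (1/N) Σ_{τ=1}^{N} a_{π*}(τ) and (1/N) Σ_{τ=1}^{N} c_{π*}(τ) converge as N → ∞, and (iii) the constraint is met with equality under π*, i.e. C(π*) = R₀. Then π* is optimal for the constrained problem: for every π ∈ Π with C(π) ≥ R₀ one has J(π) ≤ J(π*). -/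
open Filter

lemma avg_abs_le (x : ℕ → ℝ) (M : ℝ) (hM : ∀ n, |x n| ≤ M) (N : ℕ) :
    |(∑ τ ∈ Finset.Icc 1 N, x τ) / N| ≤ M := by
  have hM0 : 0 ≤ M := (abs_nonneg _).trans (hM 0)
  rcases Nat.eq_zero_or_pos N with h | h
  · simp [h, hM0]
  · have hN : (0 : ℝ) < N := by exact_mod_cast h
    rw [abs_div, abs_of_pos hN, div_le_iff₀ hN]
    calc |∑ τ ∈ Finset.Icc 1 N, x τ| ≤ ∑ τ ∈ Finset.Icc 1 N, |x τ| :=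
          Finset.abs_sum_le_sum_abs _ _
      _ ≤ ∑ _τ ∈ Finset.Icc 1 N, M := Finset.sum_le_sum fun i _ => hM i
      _ = M * N := by rw [Finset.sum_const, Nat.card_Icc]; push_cast; ring

/-- Lagrange-multiplier sufficiency for the constrained time-average problem
(Theorem 1 of the paper): if a policy `πs` is optimal for the unconstrained
Lagrangian problem with multiplier `ξ ≥ 0`, its Cesàro averages converge, and
it meets the constraint with equality, then it is optimal for the constrained
problem. -/
theorem lagrange_sufficiency
    {P : Type*} [Nonempty P]
    (a c : P → ℕ → ℝ)
    (ha_bdd : ∀ π : P, ∃ M : ℝ, ∀ n : ℕ, |a π n| ≤ M)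
    (hc_bdd : ∀ π : P, ∃ M : ℝ, ∀ n : ℕ, |c π n| ≤ M)
    (ξ R₀ : ℝ) (hξ : 0 ≤ ξ)
    (J C L : P → ℝ)
    (hJ : ∀ π : P, J π =
      Filter.liminf (fun N : ℕ => (∑ τ ∈ Finset.Icc 1 N, a π τ) / N) Filter.atTop)
    (hC : ∀ π : P, C π =
      Filter.liminf (fun N : ℕ => (∑ τ ∈ Finset.Icc 1 N, c π τ) / N) Filter.atTop)
    (hL : ∀ π : P, L π =
      Filter.liminf (fun N : ℕ => (∑ τ ∈ Finset.Icc 1 N, (a π τ + ξ * c π τ)) / N)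
        Filter.atTop)
    (πs : P)
    (hopt : ∀ π : P, L π ≤ L πs)
    (hconv_a : ∃ la : ℝ, Filter.Tendsto
      (fun N : ℕ => (∑ τ ∈ Finset.Icc 1 N, a πs τ) / N) Filter.atTop (nhds la))
    (hconv_c : ∃ lc : ℝ, Filter.Tendsto
      (fun N : ℕ => (∑ τ ∈ Finset.Icc 1 N, c πs τ) / N) Filter.atTop (nhds lc))
    (heq : C πs = R₀) :
    ∀ π : P, R₀ ≤ C π → J π ≤ J πs := by
  intro π hCπ
  obtain ⟨la, hla⟩ := hconv_a
  obtain ⟨lc, hlc⟩ := hconv_c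
  obtain ⟨Ma, hMa⟩ := ha_bdd π
  obtain ⟨Mc, hMc⟩ := hc_bdd π
  -- notation for the average sequences of π
  set A : ℕ → ℝ := fun N => (∑ τ ∈ Finset.Icc 1 N, a π τ) / N with hA
  set Cn : ℕ → ℝ := fun N => (∑ τ ∈ Finset.Icc 1 N, c π τ) / N with hCn
  have hAbd : ∀ N, |A N| ≤ Ma := avg_abs_le _ _ hMa
  have hCbd : ∀ N, |Cn N| ≤ Mc := avg_abs_le _ _ hMc
  have hA_ub : IsBoundedUnder (· ≤ ·) atTop A :=
    ⟨Ma, eventually_map.2 <| Eventually.of_forall fun N => (abs_le.mp (hAbd N)).2⟩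
  have hA_lb : IsBoundedUnder (· ≥ ·) atTop A :=
    ⟨-Ma, eventually_map.2 <| Eventually.of_forall fun N => (abs_le.mp (hAbd N)).1⟩
  have hC_ub : IsBoundedUnder (· ≤ ·) atTop Cn :=
    ⟨Mc, eventually_map.2 <| Eventually.of_forall fun N => (abs_le.mp (hCbd N)).2⟩
  have hC_lb : IsBoundedUnder (· ≥ ·) atTop Cn :=
    ⟨-Mc, eventually_map.2 <| Eventually.of_forall fun N => (abs_le.mp (hCbd N)).1⟩
  have hxC_ub : IsBoundedUnder (· ≤ ·) atTop (fun N => ξ * Cn N) :=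
    ⟨ξ * Mc, eventually_map.2 <| Eventually.of_forall fun N =>
      mul_le_mul_of_nonneg_left (abs_le.mp (hCbd N)).2 hξ⟩
  have hxC_lb : IsBoundedUnder (· ≥ ·) atTop (fun N => ξ * Cn N) :=
    ⟨ξ * (-Mc), eventually_map.2 <| Eventually.of_forall fun N =>
      mul_le_mul_of_nonneg_left (abs_le.mp (hCbd N)).1 hξ⟩
  -- the Lagrangian averages split as A + ξ·Cn
  have hsplit : (fun N : ℕ => (∑ τ ∈ Finset.Icc 1 N, (a π τ + ξ * c π τ)) / N)
      = A + fun N => ξ * Cn N := by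
    funext N
    simp only [Pi.add_apply, hA, hCn, Finset.sum_add_distrib, ← Finset.mul_sum]
    ring
  -- liminf of ξ·Cn is ξ · liminf Cn
  have hmulC : ξ * liminf Cn atTop = liminf (fun N => ξ * Cn N) atTop := by
    have := Monotone.map_liminf_of_continuousAt (F := atTop)
      (f := fun x : ℝ => ξ * x) (fun x y hxy => mul_le_mul_of_nonneg_left hxy hξ)
      Cn (Continuous.continuousAt (by continuity)) hC_ub.isCoboundedUnder_ge hC_lb
    exact this
  -- superadditivity of liminf : J π + ξ C π ≤ L π
  have key : J π + ξ * C π ≤ L π := by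
    rw [hJ, hC, hL, hsplit, hmulC]
    exact le_liminf_add hA_lb hA_ub hxC_lb hxC_ub.isCoboundedUnder_ge
  -- for πs everything converges
  have hJs : J πs = la := by rw [hJ]; exact hla.liminf_eq
  have hCs : C πs = lc := by rw [hC]; exact hlc.liminf_eq
  have hLs : L πs = la + ξ * lc := by
    rw [hL]
    have hsplit' : (fun N : ℕ => (∑ τ ∈ Finset.Icc 1 N, (a πs τ + ξ * c πs τ)) / N)
        = fun N => (∑ τ ∈ Finset.Icc 1 N, a πs τ) / N
          + ξ * ((∑ τ ∈ Finset.Icc 1 N, c πs τ) / N) := by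
      funext N
      simp only [Finset.sum_add_distrib, ← Finset.mul_sum]
      ring
    rw [hsplit']
    exact (hla.add ((hlc.const_mul ξ))).liminf_eq
  have h1 : J π + ξ * C π ≤ la + ξ * lc := key.trans (hLs ▸ hopt π)
  have h2 : ξ * lc ≤ ξ * C π := by
    apply mul_le_mul_of_nonneg_left _ hξ
    rw [← hCs, heq]
    exact hCπ
  rw [hJs]
  linarith
end

section
/- Let S be a finite nonempty set, g : S → ℝ with g(s) > 0 for all s and Σ_{s∈S} g(s) = 1, let A, B : S → ℝ with A(s) > 0 and B(s) > 0 for all s, and fix α ∈ (0,1). For ξ > 0 define η*(ξ, s) = (ξ·B(s))^{1/(α−1)} / ( (ξ·B(s))^{1/(α−1)} + A(s)^{1/(α−1)} ) (real powers; 1/(α−1) < 0), and define R̄*(ξ) = Σ_{s∈S} g(s)·B(s)·(1 − η*(ξ, s))^α. Then R̄* is strictly increasing and continuous on (0,∞). -/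
/-- The long-run average α-fair static-user utility
`R̄*(ξ) = Σ_s g(s)·B(s)·(1 − η*(ξ,s))^α` is strictly increasing and continuous
on `(0,∞)` (consequence of Lemma 3 used in Section V). -/
theorem static_alpha_utility_strict_mono_continuous
    {S : Type*} [Fintype S] [Nonempty S]
    (g A B : S → ℝ)
    (hg : ∀ s : S, 0 < g s) (hsum : ∑ s : S, g s = 1)
    (hA : ∀ s : S, 0 < A s) (hB : ∀ s : S, 0 < B s)
    (α : ℝ) (hα : α ∈ Set.Ioo (0 : ℝ) 1)
    (η : ℝ → S → ℝ)
    (hη : ∀ ξ : ℝ, 0 < ξ → ∀ s : S,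
      η ξ s = (ξ * B s) ^ (1 / (α - 1)) /
        ((ξ * B s) ^ (1 / (α - 1)) + (A s) ^ (1 / (α - 1))))
    (Rbar : ℝ → ℝ)
    (hR : ∀ ξ : ℝ, Rbar ξ = ∑ s : S, g s * B s * (1 - η ξ s) ^ α) :
    StrictMonoOn Rbar (Set.Ioi (0 : ℝ)) ∧ ContinuousOn Rbar (Set.Ioi (0 : ℝ)) := by
  obtain ⟨hα0, hα1⟩ := hα
  set p : ℝ := 1 / (α - 1) with hp
  have hpneg : p < 0 := by
    apply div_neg_of_pos_of_neg one_pos; linarith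
  have hX : ∀ (ξ : ℝ), 0 < ξ → ∀ s : S, (0:ℝ) < (ξ * B s) ^ p :=
    fun ξ hξ s => Real.rpow_pos_of_pos (mul_pos hξ (hB s)) p
  have hY : ∀ s : S, (0:ℝ) < (A s) ^ p := fun s => Real.rpow_pos_of_pos (hA s) p
  have key : ∀ (ξ : ℝ), 0 < ξ → ∀ s : S,
      1 - η ξ s = (A s) ^ p / ((ξ * B s) ^ p + (A s) ^ p) := by
    intro ξ hξ s
    rw [hη ξ hξ s]
    have hD : (ξ * B s) ^ p + (A s) ^ p ≠ 0 := (add_pos (hX ξ hξ s) (hY s)).ne'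
    field_simp
    ring
  constructor
  · intro x hx y hy hxy
    rw [hR, hR]
    refine Finset.sum_lt_sum_of_nonempty Finset.univ_nonempty ?_
    intro s _
    have hlt : (y * B s) ^ p < (x * B s) ^ p :=
      Real.rpow_lt_rpow_of_neg (mul_pos hx (hB s)) (by nlinarith [hB s]) hpneg
    have hfx : (0:ℝ) < 1 - η x s := by
      rw [key x hx s]; exact div_pos (hY s) (add_pos (hX x hx s) (hY s))
    have hfxy : 1 - η x s < 1 - η y s := by
      rw [key x hx s, key y hy s]
      exact div_lt_div_of_pos_left (hY s) (add_pos (hX y hy s) (hY s)) (by linarith)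
    have := Real.rpow_lt_rpow hfx.le hfxy hα0
    have hgB : (0:ℝ) < g s * B s := mul_pos (hg s) (hB s)
    exact mul_lt_mul_of_pos_left this hgB
  · have heq : Set.EqOn Rbar
        (fun ξ => ∑ s : S, g s * B s * ((A s) ^ p / ((ξ * B s) ^ p + (A s) ^ p)) ^ α)
        (Set.Ioi (0:ℝ)) := by
      intro ξ hξ
      rw [hR]
      exact Finset.sum_congr rfl fun s _ => by rw [key ξ hξ s]
    refine ContinuousOn.congr ?_ heq
    apply continuousOn_finset_sum
    intro s _
    apply ContinuousOn.mul continuousOn_const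
    apply ContinuousOn.rpow_const
    · apply ContinuousOn.div continuousOn_const
      · apply ContinuousOn.add
        · apply ContinuousOn.rpow_const
          · exact (continuous_id.mul continuous_const).continuousOn
          · intro ξ hξ
            exact Or.inl (mul_pos hξ (hB s)).ne'
        · exact continuousOn_const
      · intro ξ hξ
        exact (add_pos (hX ξ hξ s) (hY s)).ne'
    · intro ξ _
      exact Or.inr hα0.le
end

section
/- Let S be a finite nonempty set, g : S → ℝ with g(s) > 0 for all s and Σ_{s∈S} g(s) = 1, let A, B : S → ℝ with A(s) > 0 and B(s) > 0 for all s, and fix α ∈ (0,1). For ξ > 0 define η*(ξ, s) = (ξ·B(s))^{1/(α−1)} / ( (ξ·B(s))^{1/(α−1)} + A(s)^{1/(α−1)} ) (real powers; 1/(α−1) < 0), and define R̄*(ξ) = Σ_{s∈S} g(s)·B(s)·(1 − η*(ξ, s))^α. Then R̄*(ξ) → 0 as ξ → 0+ and R̄*(ξ) → Σ_{s∈S} g(s)·B(s) as ξ → ∞; consequently, for every R₀ with 0 < R₀ < Σ_{s∈S} g(s)·B(s), there exists a unique ξ* > 0 such that R̄*(ξ*) = R₀. -/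
open Filter

section Aux

variable {S : Type*} [Fintype S] [Nonempty S]

private lemma aux_rpow_inv_eq {p ξ : ℝ} (hξ : 0 < ξ) :
    (ξ⁻¹) ^ (-p) = ξ ^ p := by
  rw [Real.rpow_neg (inv_nonneg.mpr hξ.le), Real.inv_rpow hξ.le, inv_inv]

end Aux

/-- Feasibility claim of Section V: `R̄*(ξ) → 0` as `ξ → 0+`,
`R̄*(ξ) → Σ_s g(s)·B(s)` as `ξ → ∞`, and for every feasible constraint level
`R₀` there is a unique multiplier `ξ* > 0` with `R̄*(ξ*) = R₀`. -/
theorem static_alpha_utility_limits_and_unique_multiplier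
    {S : Type*} [Fintype S] [Nonempty S]
    (g A B : S → ℝ)
    (hg : ∀ s : S, 0 < g s) (hsum : ∑ s : S, g s = 1)
    (hA : ∀ s : S, 0 < A s) (hB : ∀ s : S, 0 < B s)
    (α : ℝ) (hα : α ∈ Set.Ioo (0 : ℝ) 1)
    (η : ℝ → S → ℝ)
    (hη : ∀ ξ : ℝ, 0 < ξ → ∀ s : S,
      η ξ s = (ξ * B s) ^ (1 / (α - 1)) /
        ((ξ * B s) ^ (1 / (α - 1)) + (A s) ^ (1 / (α - 1))))
    (Rbar : ℝ → ℝ)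
    (hR : ∀ ξ : ℝ, 0 < ξ → Rbar ξ = ∑ s : S, g s * B s * (1 - η ξ s) ^ α) :
    Filter.Tendsto Rbar (nhdsWithin 0 (Set.Ioi (0 : ℝ))) (nhds 0) ∧
    Filter.Tendsto Rbar Filter.atTop (nhds (∑ s : S, g s * B s)) ∧
    (∀ R₀ : ℝ, 0 < R₀ → R₀ < ∑ s : S, g s * B s →
      ∃! ξ : ℝ, 0 < ξ ∧ Rbar ξ = R₀) := by
  obtain ⟨hα0, hα1⟩ := hα
  set p : ℝ := 1 / (α - 1) with hp_def
  have hp : p < 0 := div_neg_of_pos_of_neg one_pos (by linarith)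
  -- positivity facts
  have hAp : ∀ s : S, 0 < (A s) ^ p := fun s => Real.rpow_pos_of_pos (hA s) p
  have hξBp : ∀ (ξ : ℝ), 0 < ξ → ∀ s : S, 0 < (ξ * B s) ^ p :=
    fun ξ hξ s => Real.rpow_pos_of_pos (mul_pos hξ (hB s)) p
  -- explicit function
  set F : ℝ → ℝ := fun ξ =>
    ∑ s : S, g s * B s * ((A s) ^ p / ((ξ * B s) ^ p + (A s) ^ p)) ^ α with hF_def
  have hden : ∀ (ξ : ℝ), 0 < ξ → ∀ s : S, 0 < (ξ * B s) ^ p + (A s) ^ p :=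
    fun ξ hξ s => add_pos (hξBp ξ hξ s) (hAp s)
  have hRF : ∀ ξ : ℝ, 0 < ξ → Rbar ξ = F ξ := by
    intro ξ hξ
    rw [hR ξ hξ]
    refine Finset.sum_congr rfl fun s _ => ?_
    rw [hη ξ hξ s]
    congr 1
    have h := (hden ξ hξ s).ne'
    field_simp
    rw [add_sub_cancel_left]
  -- each term's base in (0,1]
  have hbase_pos : ∀ (ξ : ℝ), 0 < ξ → ∀ s : S,
      0 < (A s) ^ p / ((ξ * B s) ^ p + (A s) ^ p) :=
    fun ξ hξ s => div_pos (hAp s) (hden ξ hξ s)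
  -- strict monotonicity of F on Ioi 0
  have hmono : StrictMonoOn F (Set.Ioi (0 : ℝ)) := by
    intro x hx y hy hxy
    refine Finset.sum_lt_sum_of_nonempty Finset.univ_nonempty fun s _ => ?_
    have hgB : 0 < g s * B s := mul_pos (hg s) (hB s)
    refine mul_lt_mul_of_pos_left ?_ hgB
    refine Real.rpow_lt_rpow (hbase_pos x hx s).le ?_ hα0
    have h1 : (y * B s) ^ p < (x * B s) ^ p :=
      Real.rpow_lt_rpow_of_neg (mul_pos hx (hB s))
        (by exact mul_lt_mul_of_pos_right hxy (hB s)) hp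
    exact div_lt_div_of_pos_left (hAp s) (hden y hy s) (by linarith)
  -- continuity of F on Ioi 0
  have hcont : ContinuousOn F (Set.Ioi (0 : ℝ)) := by
    refine continuousOn_finset_sum _ fun s _ => ?_
    refine (continuousOn_const.mul ?_)
    refine ContinuousOn.rpow_const ?_ fun x hx => Or.inl (hbase_pos x hx s).ne'
    refine ContinuousOn.div continuousOn_const ?_ fun x hx => (hden x hx s).ne'
    refine ContinuousOn.add ?_ continuousOn_const
    refine ContinuousOn.rpow_const ?_ fun x hx =>
      Or.inl (mul_pos hx (hB s)).ne'
    exact (continuous_id.mul continuous_const).continuousOn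
  -- limit at 0+
  have hlim0 : Tendsto F (nhdsWithin 0 (Set.Ioi (0 : ℝ))) (nhds 0) := by
    have h0 : (0 : ℝ) = ∑ s : S, g s * B s * 0 := by simp
    rw [h0]
    refine tendsto_finset_sum _ fun s _ => ?_
    refine Tendsto.const_mul _ ?_
    -- base tends to 0, then rpow α
    have hξp : Tendsto (fun ξ : ℝ => ξ ^ p) (nhdsWithin 0 (Set.Ioi (0 : ℝ))) atTop := by
      have h1 : Tendsto (fun ξ : ℝ => (ξ⁻¹) ^ (-p)) (nhdsWithin 0 (Set.Ioi (0 : ℝ))) atTop :=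
        (tendsto_rpow_atTop (by linarith)).comp tendsto_inv_nhdsGT_zero
      refine h1.congr' ?_
      filter_upwards [self_mem_nhdsWithin] with ξ hξ
      exact aux_rpow_inv_eq hξ
    have hdent : Tendsto (fun ξ : ℝ => (ξ * B s) ^ p + (A s) ^ p)
        (nhdsWithin 0 (Set.Ioi (0 : ℝ))) atTop := by
      refine Tendsto.atTop_add ?_ tendsto_const_nhds
      have h2 : Tendsto (fun ξ : ℝ => ξ ^ p * (B s) ^ p)
          (nhdsWithin 0 (Set.Ioi (0 : ℝ))) atTop :=
        hξp.atTop_mul_const (Real.rpow_pos_of_pos (hB s) p)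
      refine h2.congr' ?_
      filter_upwards [self_mem_nhdsWithin] with ξ hξ
      rw [← Real.mul_rpow (le_of_lt hξ) (hB s).le]
    have hbase : Tendsto (fun ξ : ℝ => (A s) ^ p / ((ξ * B s) ^ p + (A s) ^ p))
        (nhdsWithin 0 (Set.Ioi (0 : ℝ))) (nhds 0) :=
      Tendsto.div_atTop tendsto_const_nhds hdent
    have hc : ContinuousAt (fun x : ℝ => x ^ α) 0 :=
      Real.continuousAt_rpow_const 0 α (Or.inr hα0.le)
    have := hc.tendsto.comp hbase
    simpa [Real.zero_rpow hα0.ne', Function.comp_def] using this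
  -- limit at ∞
  have hliminf : Tendsto F atTop (nhds (∑ s : S, g s * B s)) := by
    have h0 : (∑ s : S, g s * B s) = ∑ s : S, g s * B s * 1 := by simp
    rw [h0]
    refine tendsto_finset_sum _ fun s _ => ?_
    refine Tendsto.const_mul _ ?_
    have hdent : Tendsto (fun ξ : ℝ => (ξ * B s) ^ p + (A s) ^ p)
        atTop (nhds ((A s) ^ p)) := by
      have h2 : Tendsto (fun ξ : ℝ => (ξ * B s) ^ p) atTop (nhds 0) := by
        have h3 : Tendsto (fun ξ : ℝ => ξ * B s) atTop atTop :=
          Tendsto.atTop_mul_const (hB s) tendsto_id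
        have h4 : Tendsto (fun x : ℝ => x ^ (-(-p))) atTop (nhds 0) :=
          tendsto_rpow_neg_atTop (by linarith)
        simpa [Function.comp_def] using h4.comp h3
      simpa using h2.add tendsto_const_nhds
    have hbase : Tendsto (fun ξ : ℝ => (A s) ^ p / ((ξ * B s) ^ p + (A s) ^ p))
        atTop (nhds 1) := by
      have := (tendsto_const_nhds (x := (A s) ^ p) (f := atTop)).div hdent (hAp s).ne'
      simpa [div_self (hAp s).ne', Pi.div_def] using this
    have hc : ContinuousAt (fun x : ℝ => x ^ α) 1 :=
      Real.continuousAt_rpow_const 1 α (Or.inl one_ne_zero)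
    have := hc.tendsto.comp hbase
    simpa [Real.one_rpow, Function.comp_def] using this
  have hRbar_eq : Rbar =ᶠ[nhdsWithin 0 (Set.Ioi (0 : ℝ))] F := by
    filter_upwards [self_mem_nhdsWithin] with ξ hξ using hRF ξ hξ
  have hRbar_eq' : Rbar =ᶠ[atTop] F := by
    filter_upwards [eventually_gt_atTop 0] with ξ hξ using hRF ξ hξ
  refine ⟨hlim0.congr' hRbar_eq.symm, hliminf.congr' hRbar_eq'.symm, ?_⟩
  intro R₀ hR₀ hR₀'
  -- existence: find a with F a < R₀ and b with F b > R₀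
  have ha : ∃ a : ℝ, 0 < a ∧ F a < R₀ := by
    have : ∀ᶠ ξ in nhdsWithin 0 (Set.Ioi (0 : ℝ)), F ξ < R₀ :=
      hlim0.eventually_lt_const hR₀
    obtain ⟨a, ha1, ha2⟩ := (this.and self_mem_nhdsWithin).exists
    exact ⟨a, ha2, ha1⟩
  obtain ⟨a, ha_pos, ha_lt⟩ := ha
  have hb : ∃ b : ℝ, a < b ∧ R₀ < F b := by
    have h1 : ∀ᶠ ξ in atTop, R₀ < F ξ := hliminf.eventually_const_lt hR₀'
    obtain ⟨b, hb1, hb2⟩ := ((eventually_gt_atTop a).and h1).exists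
    exact ⟨b, hb1, hb2⟩
  obtain ⟨b, hab, hb_gt⟩ := hb
  have hIcc : Set.Icc a b ⊆ Set.Ioi (0 : ℝ) := fun x hx => lt_of_lt_of_le ha_pos hx.1
  have hIVT := intermediate_value_Icc hab.le (hcont.mono hIcc)
  have hmem : R₀ ∈ Set.Icc (F a) (F b) := ⟨ha_lt.le, hb_gt.le⟩
  obtain ⟨ξ, hξ_mem, hξ_eq⟩ := hIVT hmem
  have hξ_pos : 0 < ξ := hIcc hξ_mem
  refine ⟨ξ, ⟨hξ_pos, (hRF ξ hξ_pos).trans hξ_eq⟩, ?_⟩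
  rintro y ⟨hy_pos, hy_eq⟩
  have h1 : F y = F ξ := by
    rw [← hRF y hy_pos, hy_eq, hξ_eq]
  exact hmono.injOn hy_pos hξ_pos h1
end
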